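/- Let S be a commutative local ring with maximal ideal m and residue field κ = S/m. Then there is an isomorphism Ext¹_S(κ, κ) ≅ Hom_S(m/m², κ) (equivalently, the tangent space Hom_κ(m/m², κ) of S at its closed point). -/

import Mathlib

open CategoryTheory Opposite IsLocalRing

section Aux
open Limits

noncomputable section
namespace ExtResAux
variable (S : Type) [CommRing S] [IsLocalRing S]

local notation "κ" => ModuleCat.of S (ResidueField S)
local notation "m" => maximalIdeal S

/-- projection to the submodule m -/
def lam : (↥(maximalIdeal S) →₀ S) →ₗ[S] ↥(maximalIdeal S) :=
  Finsupp.linearCombination S _root_.id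

lemma lam_surjective : Function.Surjective (lam S) := by
  intro x
  exact ⟨Finsupp.single x 1, by simp [lam]⟩

def d1 : ModuleCat.of S (↥(maximalIdeal S) →₀ S) ⟶ ModuleCat.of S S :=
  ModuleCat.ofHom ((maximalIdeal S).subtype ∘ₗ lam S)

instance : Projective (ModuleCat.of S (↥(maximalIdeal S) →₀ S)) :=
  ModuleCat.projective_of_free (Finsupp.basisSingleOne)

instance : Projective (ModuleCat.of S S) :=
  ModuleCat.projective_of_free (Module.Basis.singleton PUnit.{1} S)

lemma smul_residue_zero {x : S} (hx : x ∈ maximalIdeal S) (c : ResidueField S) :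
    x • c = 0 := by
  rw [Algebra.smul_def]
  have : algebraMap S (ResidueField S) x = 0 := Ideal.Quotient.eq_zero_iff_mem.mpr hx
  rw [this, zero_mul]

end ExtResAux

namespace ExtResAux
variable (S : Type) [CommRing S] [IsLocalRing S]

def resComplex : ChainComplex (ModuleCat S) ℕ :=
  ChainComplex.mk' (ModuleCat.of S S) (ModuleCat.of S (↥(maximalIdeal S) →₀ S)) (d1 S)
    (fun f => ⟨_, Projective.d f, by show (Projective.π _ ≫ Limits.kernel.ι f) ≫ f = 0; rw [Category.assoc, Limits.kernel.condition, Limits.comp_zero]⟩)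

lemma resComplex_d_1_0 : (resComplex S).d 1 0 = d1 S := by
  simp [resComplex]

lemma resComplex_exactAt_succ (n : ℕ) : (resComplex S).ExactAt (n + 1) := by
  rw [HomologicalComplex.exactAt_iff' _ (n + 1 + 1) (n + 1) n (by simp) (by simp)]
  refine (ShortComplex.exact_iff_of_iso ?_).1 (exact_d_f ((resComplex S).d (n + 1) n))
  refine ShortComplex.isoMk ?_ (Iso.refl _) (Iso.refl _) ?_ ?_
  · dsimp only [resComplex]
    exact (ChainComplex.mk'XIso (ModuleCat.of S S) (ModuleCat.of S (↥(maximalIdeal S) →₀ S)) (d1 S)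
      (fun f => ⟨_, Projective.d f, by show (Projective.π _ ≫ Limits.kernel.ι f) ≫ f = 0; rw [Category.assoc, Limits.kernel.condition, Limits.comp_zero]⟩) n).symm
  · dsimp only [resComplex, HomologicalComplex.sc', HomologicalComplex.shortComplexFunctor']
    rw [ChainComplex.mk'_d]
    rw [id_eq, Iso.symm_hom, Iso.inv_hom_id_assoc, Iso.refl_hom, Category.comp_id]
  · exact (Category.id_comp _).trans (Category.comp_id _).symm

instance resProjective (n : ℕ) : Projective ((resComplex S).X n) := by
  obtain (_ | _ | _ | n) := n
  · dsimp [resComplex]; infer_instance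
  · dsimp [resComplex]; infer_instance
  · apply Projective.projective_over
  · apply Projective.projective_over

def π0 : ModuleCat.of S S ⟶ ModuleCat.of S (ResidueField S) :=
  ModuleCat.ofHom (Algebra.linearMap S (ResidueField S))

lemma d1_π0 : d1 S ≫ π0 S = 0 := by
  apply ModuleCat.hom_ext; apply LinearMap.ext; intro v
  show algebraMap S (ResidueField S) ((d1 S) v) = 0
  exact Ideal.Quotient.eq_zero_iff_mem.mpr (lam S v).2

lemma exact_d1_π0 : (ShortComplex.mk (d1 S) (π0 S) (d1_π0 S)).Exact := by
  rw [ShortComplex.moduleCat_exact_iff]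
  have key : ∀ (x : S), algebraMap S (ResidueField S) x = 0 →
      ∃ v : (↥(maximalIdeal S) →₀ S), ((maximalIdeal S).subtype ∘ₗ lam S) v = x := by
    intro x hx
    have hx' : x ∈ maximalIdeal S := Ideal.Quotient.eq_zero_iff_mem.mp hx
    exact ⟨Finsupp.single ⟨x, hx'⟩ 1, by simp [lam]⟩
  exact key

instance epi_π0 : Epi (π0 S) := by
  rw [ModuleCat.epi_iff_surjective]
  intro c
  obtain ⟨y, rfl⟩ := Ideal.Quotient.mk_surjective c
  exact ⟨y, rfl⟩

def resolution : ProjectiveResolution (ModuleCat.of S (ResidueField S)) where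
  complex := resComplex S
  π := (ChainComplex.toSingle₀Equiv _ _).symm ⟨π0 S, by
          rw [resComplex_d_1_0]; exact d1_π0 S⟩
  quasiIso := ⟨fun n => by
    cases n
    · rw [ChainComplex.quasiIsoAt₀_iff, ShortComplex.quasiIso_iff_of_zeros']
      · refine (ShortComplex.exact_and_epi_g_iff_of_iso ?_).2
          ⟨exact_d1_π0 S, epi_π0 S⟩
        exact ShortComplex.isoMk (Iso.refl _) (Iso.refl _) (Iso.refl _)
          (by simp [resComplex_d_1_0]; rfl) (by simp; rfl)
      all_goals rfl
    · rw [quasiIsoAt_iff_exactAt']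
      · apply resComplex_exactAt_succ
      · apply ChainComplex.exactAt_succ_single_obj⟩

end ExtResAux

namespace ExtResAux
variable (S : Type) [CommRing S] [IsLocalRing S]

abbrev K : CochainComplex (ModuleCat S) ℕ :=
  (resComplex S).linearYonedaObj S (ModuleCat.of S (ResidueField S))

abbrev scK := (K S).sc' 0 1 2

example : (scK S).f = (K S).d 0 1 := rfl
example : (scK S).g = (K S).d 1 2 := rfl

lemma d01_zero : (K S).d 0 1 = 0 := by
  rw [ChainComplex.linearYonedaObj_d]
  apply ModuleCat.hom_ext; apply LinearMap.ext; intro (φ : (resComplex S).X 0 ⟶ ModuleCat.of S (ResidueField S))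
  show (resComplex S).d 1 0 ≫ φ = 0
  rw [resComplex_d_1_0]
  apply ModuleCat.hom_ext; apply LinearMap.ext; intro (v : ↥(maximalIdeal S) →₀ S)
  have hv : ((lam S v : S)) • (1 : S) = (d1 S) v := by
    show _ = (maximalIdeal S).subtype (lam S v)
    rw [smul_eq_mul, mul_one]
    rfl
  show φ ((d1 S) v) = 0
  rw [← hv]; refine (φ.hom.map_smul _ (1 : S)).trans ?_
  exact smul_residue_zero S (lam S v).2 _

end ExtResAux

namespace ExtResAux
variable (S : Type) [CommRing S] [IsLocalRing S]

def t : (↥(maximalIdeal S) →₀ S) →ₗ[S] (maximalIdeal S).Cotangent :=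
  (maximalIdeal S).toCotangent ∘ₗ lam S

lemma t_surjective : Function.Surjective (t S) :=
  ((maximalIdeal S).toCotangent_surjective).comp (lam_surjective S)

lemma lam_d21 (v : ↑((resComplex S).X 2)) : lam S ((resComplex S).d 2 1 v) = 0 := by
  apply Subtype.ext
  show (maximalIdeal S).subtype (lam S ((resComplex S).d 2 1 v)) = (0 : S)
  have h0 : (resComplex S).d 2 1 ≫ (resComplex S).d 1 0 = 0 :=
    HomologicalComplex.d_comp_d _ _ _ _
  have h1 : (resComplex S).d 1 0 ((resComplex S).d 2 1 v) = 0 := by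
    change ((resComplex S).d 2 1 ≫ (resComplex S).d 1 0) v = 0
    rw [h0]; rfl
  rw [resComplex_d_1_0] at h1
  exact h1

lemma exact_at_one : ∀ v : (↥(maximalIdeal S) →₀ S), lam S v = 0 →
    ∃ w, (resComplex S).d 2 1 w = v := by
  have h := resComplex_exactAt_succ S 0
  rw [HomologicalComplex.exactAt_iff' _ 2 1 0 (by simp) (by simp),
    ShortComplex.moduleCat_exact_iff] at h
  intro v hv
  have hv' : (resComplex S).d 1 0 v = 0 := by
    rw [resComplex_d_1_0]
    show (maximalIdeal S).subtype (lam S v) = (0 : S)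
    rw [hv]; simp
  exact h v hv'

def d21' : ↑((resComplex S).X 2) →ₗ[S] (↥(maximalIdeal S) →₀ S) :=
  ((resComplex S).d 2 1).hom

lemma d21'_eq (v : ↑((resComplex S).X 2)) : d21' S v = (resComplex S).d 2 1 v := rfl

def Bmap : ((maximalIdeal S).Cotangent →ₗ[S] ResidueField S) →ₗ[S]
    ↥(LinearMap.ker ((K S).d 1 2).hom) where
  toFun ψ := ⟨ModuleCat.ofHom (ψ ∘ₗ t S : (↥(maximalIdeal S) →₀ S) →ₗ[S] ResidueField S), by
    have key : (ψ ∘ₗ t S) ∘ₗ d21' S = 0 := by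
      ext v
      show ψ ((maximalIdeal S).toCotangent (lam S (d21' S v))) = 0
      rw [d21'_eq, lam_d21, map_zero, map_zero]
    exact LinearMap.mem_ker.2 (ModuleCat.hom_ext key)⟩
  map_add' ψ₁ ψ₂ := Subtype.ext (ModuleCat.hom_ext (LinearMap.add_comp _ _ _))
  map_smul' c ψ := Subtype.ext (ModuleCat.hom_ext (LinearMap.smul_comp _ _ _))

lemma Bmap_bijective : Function.Bijective (Bmap S) := by
  constructor
  · intro ψ₁ ψ₂ h
    have h' : (ψ₁ ∘ₗ t S : (↥(maximalIdeal S) →₀ S) →ₗ[S] ResidueField S)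
        = ψ₂ ∘ₗ t S := congrArg (fun x => ModuleCat.Hom.hom (Subtype.val x)) h
    ext x
    obtain ⟨v, rfl⟩ := t_surjective S x
    exact LinearMap.congr_fun h' v
  · rintro ⟨φ, hφ⟩
    let φ' : (↥(maximalIdeal S) →₀ S) →ₗ[S] ResidueField S := φ.hom
    have hφ' : φ' ∘ₗ d21' S = 0 := congrArg ModuleCat.Hom.hom (show (resComplex S).d 2 1 ≫ φ = 0 from hφ)
    have hker : LinearMap.ker (lam S) ≤ LinearMap.ker φ' := by
      intro v hv
      rw [LinearMap.mem_ker] at hv ⊢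
      obtain ⟨w, rfl⟩ := exact_at_one S v hv
      exact LinearMap.congr_fun hφ' w
    let e := (lam S).quotKerEquivOfSurjective (lam_surjective S)
    let μ : ↥(maximalIdeal S) →ₗ[S] ResidueField S :=
      ((LinearMap.ker (lam S)).liftQ φ' hker) ∘ₗ (e.symm : ↥(maximalIdeal S) →ₗ[S] _)
    have hμ : ∀ v, μ (lam S v) = φ' v := by
      intro v
      have he : e.symm (lam S v) = Submodule.Quotient.mk v := by
        apply e.injective
        rw [LinearEquiv.apply_symm_apply]
        rfl
      show ((LinearMap.ker (lam S)).liftQ φ' hker) (e.symm (lam S v)) = φ' v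
      rw [he, Submodule.liftQ_apply]
    have hsub : (maximalIdeal S • ⊤ : Submodule S ↥(maximalIdeal S)) ≤ LinearMap.ker μ := by
      refine Submodule.smul_le.2 fun r hr n _ => ?_
      rw [LinearMap.mem_ker, map_smul]
      exact smul_residue_zero S hr _
    refine ⟨Submodule.liftQ _ μ hsub, Subtype.ext ?_⟩
    have key : (Submodule.liftQ _ μ hsub) ∘ₗ t S = φ' := by
      apply LinearMap.ext
      intro v
      show (Submodule.liftQ _ μ hsub) ((maximalIdeal S).toCotangent (lam S v)) = φ' v
      show (Submodule.liftQ _ μ hsub) (Submodule.Quotient.mk (lam S v)) = φ' v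
      rw [Submodule.liftQ_apply]
      exact hμ v
    exact ModuleCat.hom_ext key

end ExtResAux

namespace ExtResAux
variable (S : Type) [CommRing S] [IsLocalRing S]

lemma toCycles_zero : (scK S).moduleCatToCycles = 0 := by
  apply LinearMap.ext
  intro x
  apply Subtype.ext
  show (scK S).f x = 0
  rw [(show (scK S).f = (K S).d 0 1 from rfl), d01_zero]
  rfl

def E2 : ↑((scK S).moduleCatLeftHomologyData.H) ≃ₗ[S]
    ((maximalIdeal S).Cotangent →ₗ[S] ResidueField S) :=
  (Submodule.quotEquivOfEqBot _
      (by rw [toCycles_zero]; exact LinearMap.range_zero)).trans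
    (LinearEquiv.ofBijective (Bmap S) (Bmap_bijective S)).symm

def bigIso :
    (((Ext S (ModuleCat S) 1).obj (Opposite.op (ModuleCat.of S (ResidueField S)))).obj
      (ModuleCat.of S (ResidueField S))) ≅ (scK S).moduleCatLeftHomologyData.H :=
  ((resolution S).isoExt 1 (ModuleCat.of S (ResidueField S))) ≪≫
    ((K S).homologyIsoSc' 0 1 2 (by simp) (by simp)) ≪≫
    (scK S).moduleCatHomologyIso

def finalEquiv :
    (((Ext S (ModuleCat S) 1).obj (Opposite.op (ModuleCat.of S (ResidueField S)))).obj
      (ModuleCat.of S (ResidueField S))) ≃ₗ[S]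
    ((maximalIdeal S).Cotangent →ₗ[S] ResidueField S) :=
  (bigIso S).toLinearEquiv.trans (E2 S)

end ExtResAux

end
end Aux

/-- For a commutative local ring `S` with maximal ideal `m` and residue field
`κ = S/m`, there is an isomorphism `Ext¹_S(κ, κ) ≅ Hom_S(m/m², κ)` (the tangent
space of `S` at its closed point). -/
theorem ext_one_residue_field_iso_hom_cotangent
    (S : Type) [CommRing S] [IsLocalRing S] :
    Nonempty
      ((((Ext S (ModuleCat S) 1).obj
            (op (ModuleCat.of S (ResidueField S)))).obj
          (ModuleCat.of S (ResidueField S))) ≃ₗ[S]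
        ((maximalIdeal S).Cotangent →ₗ[S] ResidueField S)) := by
  exact ⟨ExtResAux.finalEquiv S⟩
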